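/- Let (A, 𝔪) be a Noetherian local ring and I ⊆ A an ideal such that the extension I·Â to the 𝔪-adic completion Â is a principal ideal generated by a nonzerodivisor. Then I is a principal ideal of A. -/

import Mathlib

open IsLocalRing

section Stmt5Aux
open AdicCompletion

variable {A : Type*} [CommRing A] [IsLocalRing A] [IsNoetherianRing A]

lemma stmt5_comap_map (J : Ideal A) :
    (J.map (algebraMap A (AdicCompletion (maximalIdeal A) A))).comap
      (algebraMap A (AdicCompletion (maximalIdeal A) A)) = J := by
  set 𝔪 := maximalIdeal A
  refine le_antisymm ?_ Ideal.le_comap_map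
  intro x hx
  rw [Ideal.mem_comap] at hx
  set φ := algebraMap A (AdicCompletion 𝔪 A)
  let f : A →ₗ[A] A ⧸ (J : Submodule A A) := Submodule.mkQ (J : Submodule A A)
  let ψ := AdicCompletion.map 𝔪 f
  have hnat : ∀ z : A, ψ (φ z) = AdicCompletion.of 𝔪 (A ⧸ (J : Submodule A A)) (f z) := by
    intro z
    refine AdicCompletion.ext fun n => ?_
    rw [AdicCompletion.map_val_apply]
    rfl
  have hker : ∀ a ∈ Ideal.map φ J, ψ a = 0 := by
    intro a ha
    rw [Ideal.map, Ideal.span] at ha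
    refine Submodule.span_induction (fun y hy => ?_) ψ.map_zero (fun y z _ _ hy hz => by
      rw [ψ.map_add, hy, hz, add_zero]) (fun c y _ hy => by erw [ψ.map_smul, hy, smul_zero]) ha
    obtain ⟨j, hj, rfl⟩ := hy
    rw [hnat j, show f j = 0 from (Submodule.Quotient.mk_eq_zero _).mpr hj, LinearMap.map_zero]
  have h1 : AdicCompletion.of 𝔪 (A ⧸ (J : Submodule A A)) (f x) = 0 := by
    rw [← hnat x]; exact hker _ hx
  have h3 : f x ∈ (⨅ i : ℕ, 𝔪 ^ i • ⊤ : Submodule A (A ⧸ (J : Submodule A A))) := by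
    rw [Submodule.mem_iInf]
    intro n
    have := congrArg (fun z => z.val n) h1
    simpa [AdicCompletion.of_apply, Submodule.Quotient.mk_eq_zero,
      AdicCompletion.val_zero] using this
  rw [Ideal.iInf_pow_smul_eq_bot_of_isLocalRing 𝔪 (IsLocalRing.maximalIdeal.isMaximal A).ne_top]
    at h3
  have : f x = 0 := h3
  exact (Submodule.Quotient.mk_eq_zero (J : Submodule A A)).mp this

omit [IsNoetherianRing A] in
lemma stmt5_isUnit (x : AdicCompletion (maximalIdeal A) A)
    (hx : x.val 1 ≠ 0) : IsUnit x := by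
  have hm1 : (maximalIdeal A ^ 1 • ⊤ : Ideal A) = maximalIdeal A := by ext y; simp
  have key : ∀ n, IsUnit (x.val n) := by
    intro n
    rcases Nat.eq_zero_or_pos n with hn | hn
    · subst hn
      have : Subsingleton (A ⧸ ((maximalIdeal A) ^ 0 • ⊤ : Submodule A A)) := by
        rw [pow_zero, Submodule.Quotient.subsingleton_iff]
        simp
      exact isUnit_of_subsingleton _
    · obtain ⟨r, hr⟩ := Submodule.Quotient.mk_surjective _ (x.val n)
      have h1 : (Submodule.Quotient.mk r :
          A ⧸ ((maximalIdeal A) ^ 1 • ⊤ : Submodule A A)) = x.val 1 := by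
        rw [← x.property hn, ← hr]
        exact AdicCompletion.transitionMap_ideal_mk (maximalIdeal A) hn r
      have hrm : r ∉ maximalIdeal A := by
        intro hmem
        apply hx
        rw [← h1, Submodule.Quotient.mk_eq_zero]
        rw [show ((maximalIdeal A) ^ 1 • ⊤ : Submodule A A)
          = (maximalIdeal A : Submodule A A) from hm1]
        exact hmem
      have hu : IsUnit r := by
        by_contra hnu
        exact hrm hnu
      have := hu.map (Ideal.Quotient.mk ((maximalIdeal A) ^ n • ⊤ : Ideal A))
      rwa [show (Ideal.Quotient.mk ((maximalIdeal A) ^ n • ⊤ : Ideal A)) r = x.val n from hr]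
        at this
  refine IsUnit.of_mul_eq_one (M := AdicCompletion (maximalIdeal A) A) (a := x) ⟨fun n => ((key n).unit⁻¹ : _), ?_⟩ ?_
  · intro m n hmn
    have hcan : ∀ {m n : ℕ} (hmn : m ≤ n)
        (a : A ⧸ ((maximalIdeal A :Ideal A) ^ n • ⊤ : Ideal A)),
        AdicCompletion.transitionMap (maximalIdeal A) A hmn a
          = AdicCompletion.transitionMapₐ (maximalIdeal A) hmn a :=
      fun {_ _} _ _ => rfl
    refine (key m).mul_left_cancel ?_
    rw [hcan hmn]
    calc x.val m * (transitionMapₐ (maximalIdeal A) hmn ((key n).unit⁻¹ : _))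
        = transitionMapₐ (maximalIdeal A) hmn (x.val n)
            * transitionMapₐ (maximalIdeal A) hmn ((key n).unit⁻¹ : _) := by
          rw [show (transitionMapₐ (maximalIdeal A) hmn (x.val n)) = x.val m from x.property hmn]
      _ = transitionMapₐ (maximalIdeal A) hmn ((x.val n) * ((key n).unit⁻¹ : _)) := by
          rw [map_mul]
      _ = 1 := by rw [(key n).mul_val_inv, map_one]
      _ = x.val m * ((key m).unit⁻¹ : _) := ((key m).mul_val_inv).symm
  · refine AdicCompletion.ext fun n => ?_
    erw [AdicCompletion.val_mul]
    erw [AdicCompletion.val_one]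
    exact (key n).mul_val_inv

end Stmt5Aux

/-- Let `(A, 𝔪)` be a Noetherian local ring and `I ⊆ A` an ideal such that
the extension `I·Â` to the `𝔪`-adic completion `Â` is principal, generated by a
nonzerodivisor.  Then `I` is a principal ideal of `A`. -/
theorem stmt_5 (A : Type*) [CommRing A] [IsLocalRing A] [IsNoetherianRing A] (I : Ideal A)
    (h : ∃ g : AdicCompletion (maximalIdeal A) A,
      g ∈ nonZeroDivisors (AdicCompletion (maximalIdeal A) A) ∧
      Ideal.map (algebraMap A (AdicCompletion (maximalIdeal A) A)) I = Ideal.span {g}) :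
    ∃ a : A, I = Ideal.span {a} := by
  obtain ⟨g, hg, hspan⟩ := h
  set φ := algebraMap A (AdicCompletion (maximalIdeal A) A) with hφ
  have hgmem : g ∈ Ideal.map φ I := hspan ▸ Ideal.mem_span_singleton_self g
  rw [Ideal.map] at hgmem
  obtain ⟨c, hsupp, hsum⟩ := Submodule.mem_span_set.mp hgmem
  -- each z in the support is in span {g}
  have hv : ∀ z ∈ c.support, ∃ d, d * g = z := by
    intro z hz
    have : z ∈ Ideal.map φ I := by
      rw [Ideal.map]
      exact Submodule.subset_span (hsupp hz)
    rw [hspan] at this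
    exact Ideal.mem_span_singleton'.mp this
  choose! d hd using hv
  have hsum' : (∑ z ∈ c.support, c z * d z) * g = g := by
    rw [Finset.sum_mul]
    calc ∑ z ∈ c.support, c z * d z * g = ∑ z ∈ c.support, c z • z :=
          Finset.sum_congr rfl fun z hz => by rw [mul_assoc, hd z hz, smul_eq_mul]
      _ = g := by rw [← hsum, Finsupp.sum]
  have hS : (∑ z ∈ c.support, c z * d z) = 1 :=
    sub_eq_zero.mp (hg.2 _ (by rw [sub_mul, one_mul, hsum', sub_self]))
  -- find an index whose term is nonzero at level 1
  have hnontriv : Nontrivial (A ⧸ ((maximalIdeal A) ^ 1 • ⊤ : Ideal A)) := by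
    refine Ideal.Quotient.nontrivial_iff.mpr ?_
    have : ((maximalIdeal A) ^ 1 • ⊤ : Ideal A) = maximalIdeal A := by ext y; simp
    rw [this]
    exact (IsLocalRing.maximalIdeal.isMaximal A).ne_top
  have h1ne : (1 : AdicCompletion (maximalIdeal A) A).val 1 ≠ 0 := by
    rw [AdicCompletion.val_one]
    exact one_ne_zero
  have hex : ∃ z ∈ c.support, ((c z * d z).val 1) ≠ 0 := by
    by_contra hcon
    push_neg at hcon
    apply h1ne
    rw [← hS, AdicCompletion.val_sum_apply]
    exact Finset.sum_eq_zero hcon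
  obtain ⟨z, hz, hzne⟩ := hex
  have hdz : IsUnit (d z) := by
    refine stmt5_isUnit (d z) fun h0 => hzne ?_
    rw [AdicCompletion.val_mul, h0, mul_zero]
  -- now span {g} = span {z}
  have hspan2 : Ideal.span {z} = Ideal.span ({g} : Set (AdicCompletion (maximalIdeal A) A)) := by
    apply le_antisymm
    · rw [Ideal.span_singleton_le_iff_mem]
      exact Ideal.mem_span_singleton'.mpr ⟨d z, hd z hz⟩
    · rw [Ideal.span_singleton_le_iff_mem]
      refine Ideal.mem_span_singleton'.mpr ⟨(hdz.unit⁻¹ : _), ?_⟩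
      have hh : (hdz.unit⁻¹ : _) * (d z * g) = g := by
        rw [← mul_assoc, hdz.val_inv_mul, one_mul]
      rw [hd z hz] at hh
      exact hh
  -- z = φ a with a ∈ I
  obtain ⟨a, haI, haz⟩ := hsupp hz
  refine ⟨a, ?_⟩
  have hmap : Ideal.map φ (Ideal.span {a}) = Ideal.map φ I := by
    rw [Ideal.map_span, Set.image_singleton, haz, hspan2, hspan]
  calc I = (Ideal.map φ I).comap φ := (stmt5_comap_map I).symm
    _ = (Ideal.map φ (Ideal.span {a})).comap φ := by rw [hmap]
    _ = Ideal.span {a} := stmt5_comap_map _
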